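/- For every integer p ≥ 1 and every θ ∈ (0,π), the absolutely convergent series satisfies ∑_{j∈ℤ} (θ+2πj)^{−(2p+1)} > 0; consequently C_p(θ) < 0 for all θ ∈ (0,π) and C_p(θ) > 0 for all θ ∈ (−π,0). -/
import Mathlib


/-- `C_p(θ) = -(2-2cos θ)^{p+1} · ∑_{j∈ℤ} (θ+2πj)^{-(2p+1)}`. -/
noncomputable def Cp (p : ℕ) (θ : ℝ) : ℝ :=
  -(2 - 2 * Real.cos θ) ^ (p + 1) *
    ∑' j : ℤ, ((θ + 2 * Real.pi * (j : ℝ)) ^ (2 * p + 1))⁻¹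

open Real

private lemma base_summable (p : ℕ) (hp : 1 ≤ p) :
    Summable (fun k : ℕ => (((k : ℝ) + 1) ^ (2 * p + 1))⁻¹) := by
  have h : Summable (fun n : ℕ => ((n : ℝ) ^ (2 * p + 1))⁻¹) :=
    Real.summable_nat_pow_inv.mpr (by omega)
  have := (summable_nat_add_iff 1).mpr h
  refine this.congr fun k => ?_
  push_cast
  ring_nf

private lemma series_pos (p : ℕ) (hp : 1 ≤ p) {θ : ℝ} (hθ : θ ∈ Set.Ioo (0 : ℝ) Real.pi) :
    0 < ∑' j : ℤ, ((θ + 2 * Real.pi * (j : ℝ)) ^ (2 * p + 1))⁻¹ := by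
  obtain ⟨hθ0, hθπ⟩ := hθ
  have hπ := Real.pi_gt_three
  set n := 2 * p + 1 with hn
  set f : ℤ → ℝ := fun j => ((θ + 2 * Real.pi * (j : ℝ)) ^ n)⁻¹ with hf
  have hb : Summable (fun k : ℕ => (((k : ℝ) + 1) ^ n)⁻¹) := base_summable p hp
  -- summability of the nonnegative part
  have h1 : Summable (fun k : ℕ => f (k : ℤ)) := by
    set m := min θ 1 with hm
    have hm0 : 0 < m := lt_min hθ0 one_pos
    refine Summable.of_nonneg_of_le (fun k => ?_) (fun k => ?_)
      ((hb.mul_left ((m ^ n)⁻¹)))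
    · positivity
    · have hk : m * ((k : ℝ) + 1) ≤ θ + 2 * Real.pi * (k : ℝ) := by
        have h1 : m ≤ θ := min_le_left _ _
        have h2 : m * k ≤ 2 * Real.pi * k := by
          have : m ≤ 2 * Real.pi := by
            have : m ≤ 1 := min_le_right _ _
            nlinarith
          exact mul_le_mul_of_nonneg_right this (Nat.cast_nonneg k)
        nlinarith
      have hmk : 0 < m * ((k : ℝ) + 1) := by positivity
      have : ((θ + 2 * Real.pi * (k : ℝ)) ^ n)⁻¹ ≤ ((m * ((k : ℝ) + 1)) ^ n)⁻¹ := by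
        apply inv_anti₀ (by positivity)
        exact pow_le_pow_left₀ hmk.le hk n
      simpa [mul_pow, mul_inv, hf, mul_comm] using this
  -- summability of the negative part
  have key2 : ∀ k : ℕ, f (-((k : ℤ) + 1)) = -(((2 * Real.pi * ((k : ℝ) + 1) - θ) ^ n)⁻¹) := by
    intro k
    have hodd : Odd n := ⟨p, by omega⟩
    have : θ + 2 * Real.pi * ((-((k : ℤ) + 1) : ℤ) : ℝ) = -(2 * Real.pi * ((k : ℝ) + 1) - θ) := by
      push_cast; ring
    rw [hf]
    simp only [this, hodd.neg_pow, inv_neg]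
  have h2 : Summable (fun k : ℕ => f (-((k : ℤ) + 1))) := by
    have hs : Summable (fun k : ℕ => ((2 * Real.pi * ((k : ℝ) + 1) - θ) ^ n)⁻¹) := by
      refine Summable.of_nonneg_of_le (fun k => ?_) (fun k => ?_) hb
      · have : 0 < 2 * Real.pi * ((k : ℝ) + 1) - θ := by nlinarith [Nat.cast_nonneg (α := ℝ) k]
        positivity
      · apply inv_anti₀ (by positivity)
        apply pow_le_pow_left₀ (by positivity)
        nlinarith [Nat.cast_nonneg (α := ℝ) k]
    exact (hs.neg).congr fun k => (key2 k).symm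
  have hdecomp : (∑' j : ℤ, f j) = (∑' k : ℕ, f k) + ∑' k : ℕ, f (-(k + 1)) := by
    exact tsum_of_nat_of_neg_add_one h1 h2
  have hpair : ∀ k : ℕ, 0 < f k + f (-((k : ℤ) + 1)) := by
    intro k
    rw [key2 k]
    have ha : 0 < θ + 2 * Real.pi * (k : ℝ) := by nlinarith [Nat.cast_nonneg (α := ℝ) k]
    have hab : θ + 2 * Real.pi * (k : ℝ) < 2 * Real.pi * ((k : ℝ) + 1) - θ := by nlinarith
    have : ((2 * Real.pi * ((k : ℝ) + 1) - θ) ^ n)⁻¹ < ((θ + 2 * Real.pi * (k : ℝ)) ^ n)⁻¹ := by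
      apply inv_strictAnti₀ (by positivity)
      exact pow_lt_pow_left₀ hab ha.le (by omega)
    simp only [hf]
    push_cast
    linarith
  rw [hdecomp, ← Summable.tsum_add h1 h2]
  refine Summable.tsum_pos (h1.add h2) (fun k => ?_) 0 ?_
  · have := hpair k; push_cast at this ⊢; linarith
  · have := hpair 0; push_cast at this ⊢; linarith

private lemma series_neg_eq (p : ℕ) (θ : ℝ) :
    (∑' j : ℤ, ((θ + 2 * Real.pi * (j : ℝ)) ^ (2 * p + 1))⁻¹) =
      -∑' j : ℤ, ((-θ + 2 * Real.pi * (j : ℝ)) ^ (2 * p + 1))⁻¹ := by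
  have hodd : Odd (2 * p + 1) := ⟨p, by omega⟩
  have h1 : ∀ j : ℤ, ((θ + 2 * Real.pi * (j : ℝ)) ^ (2 * p + 1))⁻¹ =
      -(((-θ + 2 * Real.pi * (((-j : ℤ)) : ℝ)) ^ (2 * p + 1))⁻¹) := by
    intro j
    have : -θ + 2 * Real.pi * (((-j : ℤ)) : ℝ) = -(θ + 2 * Real.pi * (j : ℝ)) := by
      push_cast; ring
    rw [this, hodd.neg_pow, inv_neg, neg_neg]
  calc (∑' j : ℤ, ((θ + 2 * Real.pi * (j : ℝ)) ^ (2 * p + 1))⁻¹)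
      = ∑' j : ℤ, -(((-θ + 2 * Real.pi * (((-j : ℤ)) : ℝ)) ^ (2 * p + 1))⁻¹) := by
        exact tsum_congr h1
    _ = -∑' j : ℤ, ((-θ + 2 * Real.pi * (((-j : ℤ)) : ℝ)) ^ (2 * p + 1))⁻¹ := tsum_neg
    _ = -∑' j : ℤ, ((-θ + 2 * Real.pi * (j : ℝ)) ^ (2 * p + 1))⁻¹ := by
        congr 1
        exact (Equiv.neg ℤ).tsum_eq fun j => ((-θ + 2 * Real.pi * (j : ℝ)) ^ (2 * p + 1))⁻¹

/-- For every integer `p ≥ 1` and `θ ∈ (0,π)`, the series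
`∑_{j∈ℤ} (θ+2πj)^{-(2p+1)}` is positive; consequently `C_p < 0` on `(0,π)`
and `C_p > 0` on `(-π,0)`. -/
theorem series_pos_and_Cp_sign (p : ℕ) (hp : 1 ≤ p) :
    (∀ θ ∈ Set.Ioo (0 : ℝ) Real.pi,
        0 < ∑' j : ℤ, ((θ + 2 * Real.pi * (j : ℝ)) ^ (2 * p + 1))⁻¹) ∧
    (∀ θ ∈ Set.Ioo (0 : ℝ) Real.pi, Cp p θ < 0) ∧
    (∀ θ ∈ Set.Ioo (-Real.pi) (0 : ℝ), 0 < Cp p θ) := by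
  have hfac : ∀ θ : ℝ, θ ≠ 0 → -Real.pi ≤ θ → θ ≤ Real.pi →
      -(2 - 2 * Real.cos θ) ^ (p + 1) < 0 := by
    intro θ hne h1 h2
    have : Real.cos θ < 1 := by
      rcases lt_or_gt_of_ne hne with h | h
      · have := Real.cos_lt_cos_of_nonneg_of_le_pi (le_refl 0) (by linarith : -θ ≤ Real.pi)
          (by linarith : (0:ℝ) < -θ)
        rwa [Real.cos_zero, Real.cos_neg] at this
      · have := Real.cos_lt_cos_of_nonneg_of_le_pi (le_refl 0) h2 h
        rwa [Real.cos_zero] at this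
    have : 0 < 2 - 2 * Real.cos θ := by linarith
    have : 0 < (2 - 2 * Real.cos θ) ^ (p + 1) := by positivity
    linarith
  refine ⟨fun θ hθ => series_pos p hp hθ, fun θ hθ => ?_, fun θ hθ => ?_⟩
  · have hS := series_pos p hp hθ
    have hf := hfac θ (ne_of_gt hθ.1) (by linarith [hθ.1, Real.pi_pos]) hθ.2.le
    exact mul_neg_of_neg_of_pos hf hS
  · obtain ⟨h1, h2⟩ := hθ
    have hS : (∑' j : ℤ, ((θ + 2 * Real.pi * (j : ℝ)) ^ (2 * p + 1))⁻¹) < 0 := by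
      rw [series_neg_eq p θ]
      have := series_pos p hp (Set.mem_Ioo.mpr ⟨by linarith, by linarith⟩ :
        -θ ∈ Set.Ioo (0 : ℝ) Real.pi)
      linarith
    have hf := hfac θ (ne_of_lt h2) (by linarith) (by linarith [Real.pi_pos])
    exact mul_pos_of_neg_of_neg hf hS
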